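/- Elementary inequality (Lemma 'numerical-lower-bound'). For every real ε with 0 ≤ ε < √2, (2 + ε) / (2 · (1 + ε)^{(1+ε)/(2+ε)}) ≥ 1 − ε²/2. -/

import Mathlib

/-- **Elementary inequality (Lemma `numerical-lower-bound`).**
For every real `0 ≤ ε < √2`, `(2 + ε) / (2 (1 + ε)^{(1+ε)/(2+ε)}) ≥ 1 − ε²/2`.
The power is the real power function. -/
theorem stmt12 (ε : ℝ) (hε0 : 0 ≤ ε) (hε1 : ε < Real.sqrt 2) :
    1 - ε ^ 2 / 2 ≤ (2 + ε) / (2 * (1 + ε) ^ ((1 + ε) / (2 + ε))) := by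
  set p : ℝ := (1 + ε) / (2 + ε) with hp
  have h2ε : (0:ℝ) < 2 + ε := by linarith
  have hp0 : 0 ≤ p := by positivity
  have hp1 : p ≤ 1 := by
    rw [hp, div_le_one h2ε]; linarith
  have hB : (1 + ε) ^ p ≤ 1 + p * ε :=
    rpow_one_add_le_one_add_mul_self (by linarith) hp0 hp1
  have hxpos : (0:ℝ) < (1 + ε) ^ p := Real.rpow_pos_of_pos (by linarith) _
  have h1 : (2 + ε) / (2 * (1 + p * ε)) ≤ (2 + ε) / (2 * (1 + ε) ^ p) := by
    apply div_le_div_of_nonneg_left (by linarith) (by positivity)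
    nlinarith
  refine le_trans ?_ h1
  rw [le_div_iff₀ (by nlinarith)]
  have hpe : p * (2 + ε) = 1 + ε := by
    rw [hp, div_mul_cancel₀ _ h2ε.ne']
  nlinarith [sq_nonneg ε, mul_nonneg hε0 (mul_nonneg hε0 hε0), sq_nonneg (ε*ε)]
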